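/- For any algebraic integer λ in the ring of integers of K = Q(ζ₇ + ζ₇⁻¹), the field norm N_{K/Q}(λ) is congruent to 0, 1, or -1 modulo 7. -/

import Mathlib

open Real Polynomial IntermediateField NumberField

private theorem beta_rel : (2*Real.cos (2*π/7))^3 + (2*Real.cos (2*π/7))^2
    - 2*(2*Real.cos (2*π/7)) - 1 = 0 := by
  set θ : ℝ := 2*π/7 with hθ
  have key : ((2*Real.cos θ : ℝ) : ℂ)^3 + ((2*Real.cos θ : ℝ) : ℂ)^2
      - 2*((2*Real.cos θ : ℝ) : ℂ) - 1 = 0 := by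
    set z : ℂ := Complex.exp ((θ : ℂ) * Complex.I) with hz
    have hz7 : z^7 = 1 := by
      rw [hz, ← Complex.exp_nat_mul]
      have : ((7:ℕ):ℂ) * ((θ:ℂ) * Complex.I) = 2*(π:ℂ)*Complex.I := by
        rw [hθ]; push_cast; ring
      rw [this, Complex.exp_two_pi_mul_I]
    have hz1 : z ≠ 1 := by
      intro h
      have him : z.im = Real.sin θ := by
        rw [hz]; simp [Complex.exp_im]
      have hpos : 0 < Real.sin θ := by
        apply Real.sin_pos_of_pos_of_lt_pi
        · rw [hθ]; positivity
        · rw [hθ]; nlinarith [Real.pi_pos]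
      rw [h] at him
      simp at him
      nlinarith
    have hzinv : z⁻¹ = z^6 := by
      rw [inv_eq_of_mul_eq_one_right]
      rw [← pow_succ']
      exact hz7
    have hβz : ((2*Real.cos θ : ℝ) : ℂ) = z + z^6 := by
      have h1 : ((2*Real.cos θ : ℝ) : ℂ) = 2 * Complex.cos (θ:ℂ) := by
        push_cast [Complex.ofReal_cos]; ring
      rw [h1, Complex.two_cos,
        show (-(θ:ℂ))*Complex.I = -((θ:ℂ)*Complex.I) from by ring,
        Complex.exp_neg, ← hz, hzinv]
    rw [hβz]
    have hfac : (z - 1) * ((z+z^6)^3 + (z+z^6)^2 - 2*(z+z^6) - 1) = 0 := by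
      linear_combination (z^12 - z^11 + 3*z^7 - 2*z^6 - z^4 + 3*z^2 - z - 1) * hz7
    exact (mul_eq_zero.mp hfac).resolve_left (sub_ne_zero.mpr hz1)
  exact_mod_cast key

private theorem cube_zmod7 : ∀ c : ZMod 7, c^3 = 0 ∨ c^3 = 1 ∨ c^3 = -1 := by decide

private theorem zmod7_7 : (7 : ZMod 7) = 0 := by decide

private theorem zmod7_14 : (14 : ZMod 7) = 0 := by decide

set_option maxHeartbeats 2000000 in
set_option synthInstance.maxHeartbeats 400000 in
/-- For any algebraic integer λ in the ring of integers of
`K = ℚ(ζ₇ + ζ₇⁻¹)` (realized as the subfield of `ℝ` generated by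
`2 cos (2π/7) = ζ₇ + ζ₇⁻¹`), the field norm `N_{K/ℚ}(λ)` is congruent to
`0`, `1` or `-1` modulo `7`. -/
theorem norm_mod_seven
    (K : IntermediateField ℚ ℝ)
    (hK : K = IntermediateField.adjoin ℚ {(2 * Real.cos (2 * π / 7) : ℝ)})
    (lam : NumberField.RingOfIntegers K) :
    Algebra.norm ℤ lam ≡ 0 [ZMOD 7] ∨ Algebra.norm ℤ lam ≡ 1 [ZMOD 7] ∨
      Algebra.norm ℤ lam ≡ -1 [ZMOD 7] := by
  subst hK
  haveI hfact7 : Fact (Nat.Prime 7) := ⟨by norm_num⟩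
  revert lam
  set β : ℝ := 2 * Real.cos (2 * π / 7) with hβdef
  intro lam
  have hrel : β^3 + β^2 - 2*β - 1 = 0 := beta_rel
  -- the minimal polynomial
  set f : ℚ[X] := X^3 + X^2 - C 2 * X - 1 with hfdef
  have hfm : f.Monic := by
    unfold f
    monicity!
  have hfdeg : f.natDegree = 3 := by
    unfold f
    compute_degree!
  have hfβ : Polynomial.aeval β f = 0 := by
    simp only [hfdef, map_add, map_sub, map_mul, map_pow, aeval_X, aeval_C, map_one, map_ofNat]
    push_cast
    linear_combination hrel
  have hint : IsIntegral ℚ β := ⟨f, hfm, by simpa [Polynomial.aeval_def] using hfβ⟩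
  -- irreducibility
  have hroots : f.roots = 0 := by
    rw [Multiset.eq_zero_iff_forall_notMem]
    intro r hr
    rw [mem_roots (hfm.ne_zero)] at hr
    have hr0 : r^3 + r^2 - 2*r - 1 = 0 := by
      have := hr
      simp only [hfdef, IsRoot.def, eval_add, eval_sub, eval_mul, eval_pow, eval_X, eval_C,
        eval_one] at this
      linarith
    -- r is an integer
    have hrint : IsIntegral ℤ r := by
      refine ⟨(X^3 + X^2 - C 2 * X - 1 : ℤ[X]), by monicity!, ?_⟩
      simp only [eval₂_add, eval₂_sub, eval₂_mul, eval₂_pow, eval₂_X, eval₂_C, eval₂_one,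
        eval₂_ofNat, map_ofNat]
      push_cast
      linear_combination hr0
    obtain ⟨m, rfl⟩ := IsIntegrallyClosed.isIntegral_iff.mp hrint
    rw [algebraMap_int_eq] at hr0
    have hmz : m^3 + m^2 - 2*m - 1 = 0 := by
      simp only [eq_intCast] at hr0
      exact_mod_cast hr0
    have hdvd : m ∣ 1 := ⟨m^2 + m - 2, by linarith [hmz]⟩
    rcases Int.isUnit_iff.mp (isUnit_of_dvd_one hdvd) with h1 | h1 <;> rw [h1] at hmz <;> omega
  have hirr : Irreducible f :=
    (Polynomial.irreducible_iff_roots_eq_zero_of_degree_le_three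
      (by omega) (by omega)).mpr hroots
  have hmin : minpoly ℚ β = f := (minpoly.eq_of_irreducible_of_monic hirr hfβ hfm).symm
  haveI hfd : FiniteDimensional ℚ ℚ⟮β⟯ := IntermediateField.adjoin.finiteDimensional hint
  have hfinrank : Module.finrank ℚ ℚ⟮β⟯ = 3 := by
    rw [IntermediateField.adjoin.finrank hint, hmin, hfdeg]
  -- the generator
  set B : ℚ⟮β⟯ := IntermediateField.AdjoinSimple.gen ℚ β with hBdef
  have hBcoe : (B : ℝ) = β := rfl
  have hBrel : B^3 + B^2 - 2*B - 1 = 0 := by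
    have h2K : ((2 : ℚ⟮β⟯) : ℝ) = 2 := rfl
    have : ((B^3 + B^2 - 2*B - 1 : ℚ⟮β⟯) : ℝ) = 0 := by
      push_cast [hBcoe, h2K]
      linear_combination hrel
    exact_mod_cast this
  -- splitting
  have hBC : (C B)^3 + (C B)^2 - 2*(C B) - 1 = (0 : (ℚ⟮β⟯)[X]) := by
    have := congrArg (Polynomial.C : ℚ⟮β⟯ → (ℚ⟮β⟯)[X]) hBrel
    simpa [map_ofNat] using this
  have hmap : f.map (algebraMap ℚ ℚ⟮β⟯)
      = (X - C B) * (X - C (B^2 - 2)) * (X - C (1 - B - B^2)) := by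
    simp only [hfdef, Polynomial.map_add, Polynomial.map_sub, Polynomial.map_mul,
      Polynomial.map_pow, Polynomial.map_X, Polynomial.map_one, Polynomial.map_ofNat, map_C]
    push_cast
    simp only [map_sub, map_add, map_one, map_pow, map_ofNat]
    linear_combination (Polynomial.C B * X - (Polynomial.C B)^2 + 1) * hBC
  have hsplits : (f.map (algebraMap ℚ ℚ⟮β⟯)).Splits := by
    rw [hmap]
    exact Polynomial.Splits.mul
      (Polynomial.Splits.mul (Polynomial.Splits.X_sub_C _) (Polynomial.Splits.X_sub_C _))
      (Polynomial.Splits.X_sub_C _)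
  haveI hsf : Polynomial.IsSplittingField ℚ ℚ⟮β⟯ f := by
    constructor
    · exact hsplits
    · rw [eq_top_iff]
      have hmem : B ∈ f.rootSet ℚ⟮β⟯ := by
        rw [Polynomial.mem_rootSet]
        exact ⟨hfm.ne_zero, by
          simp only [hfdef, map_add, map_sub, map_mul, map_pow, aeval_X, aeval_C, map_one,
            map_ofNat]
          linear_combination hBrel⟩
      calc ⊤ = Algebra.adjoin ℚ {(IntermediateField.adjoin.powerBasis hint).gen} :=
            ((IntermediateField.adjoin.powerBasis hint).adjoin_gen_eq_top).symm
        _ ≤ Algebra.adjoin ℚ (f.rootSet ℚ⟮β⟯) := by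
            apply Algebra.adjoin_mono
            rw [Set.singleton_subset_iff]
            rw [IntermediateField.adjoin.powerBasis_gen]
            exact hmem
  haveI hgal : IsGalois ℚ ℚ⟮β⟯ := IsGalois.of_separable_splitting_field hirr.separable
  haveI : NumberField ℚ⟮β⟯ := by constructor
  -- the prime element π = B - 2
  have hBint : IsIntegral ℤ B := by
    refine ⟨(X^3 + X^2 - 2*X - 1 : ℤ[X]), by monicity!, ?_⟩
    simp only [eval₂_add, eval₂_sub, eval₂_mul, eval₂_pow, eval₂_X, eval₂_one, eval₂_ofNat]
    linear_combination hBrel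
  have h2int : IsIntegral ℤ (2 : ℚ⟮β⟯) := by
    refine ⟨(X - 2 : ℤ[X]), by monicity!, ?_⟩
    simp only [eval₂_sub, eval₂_X, eval₂_ofNat]
    ring
  set piO : 𝓞 ℚ⟮β⟯ := ⟨B - 2, hBint.sub h2int⟩ with hpiOdef
  have hpiOcoe : (algebraMap (𝓞 ℚ⟮β⟯) ℚ⟮β⟯) piO = B - 2 := rfl
  -- power basis with generator B - 2
  have hB2int : IsIntegral ℚ (B - 2 : ℚ⟮β⟯) := IsIntegral.of_finite ℚ _
  set pb : PowerBasis ℚ ℚ⟮β⟯ := IntermediateField.adjoin.powerBasis hint with hpbdef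
  have hpbmem : pb.gen ∈ Algebra.adjoin ℚ ({B - 2} : Set ℚ⟮β⟯) := by
    rw [hpbdef, IntermediateField.adjoin.powerBasis_gen]
    have h1 : (B - 2 : ℚ⟮β⟯) ∈ Algebra.adjoin ℚ ({B - 2} : Set ℚ⟮β⟯) :=
      Algebra.subset_adjoin rfl
    have h2 : (2 : ℚ⟮β⟯) ∈ Algebra.adjoin ℚ ({B - 2} : Set ℚ⟮β⟯) := by
      exact_mod_cast Subalgebra.natCast_mem _ 2
    have := add_mem h1 h2
    simpa using this
  set pb2 : PowerBasis ℚ ℚ⟮β⟯ := PowerBasis.ofAdjoinEqTop hB2int (by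
    rw [eq_top_iff, ← pb.adjoin_gen_eq_top]
    exact Algebra.adjoin_le (Set.singleton_subset_iff.mpr hpbmem)) with hpb2def
  have hpb2gen : pb2.gen = B - 2 := by rw [hpb2def, PowerBasis.ofAdjoinEqTop_gen]
  have hpb2dim : pb2.dim = 3 := by
    rw [← hfinrank, pb2.finrank]
  -- minimal polynomial of B - 2
  set g : ℚ[X] := X^3 + C 7 * X^2 + C 14 * X + C 7 with hgdef
  have hgm : g.Monic := by unfold g; monicity!
  have hgdeg : g.natDegree = 3 := by unfold g; compute_degree!
  have hgev : Polynomial.aeval (B - 2 : ℚ⟮β⟯) g = 0 := by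
    simp only [hgdef, map_add, map_mul, map_pow, aeval_X, aeval_C, map_ofNat]
    linear_combination hBrel
  have hming : minpoly ℚ (B - 2 : ℚ⟮β⟯) = g := by
    refine (Polynomial.eq_of_monic_of_dvd_of_natDegree_le (minpoly.monic hB2int) hgm
      (minpoly.dvd ℚ _ hgev) ?_).symm
    rw [hgdeg]
    rw [← hpb2gen, pb2.natDegree_minpoly, hpb2dim]
  have hnormB2 : Algebra.norm ℚ (B - 2 : ℚ⟮β⟯) = -7 := by
    have h := Algebra.PowerBasis.norm_gen_eq_coeff_zero_minpoly pb2
    rw [hpb2gen, hming, hpb2dim] at h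
    rw [h, hgdef]
    simp [coeff_add, coeff_C_mul, coeff_X_pow, coeff_C]
    norm_num
  have hNormpi : Algebra.norm ℤ piO = -7 := by
    have h := Algebra.coe_norm_int (K := ℚ⟮β⟯) piO
    rw [show ((piO : ℚ⟮β⟯)) = B - 2 from rfl, hnormB2] at h
    exact_mod_cast h
  -- the quotient ring
  set I : Ideal (𝓞 ℚ⟮β⟯) := Ideal.span {piO} with hIdef
  have hcard : Nat.card ((𝓞 ℚ⟮β⟯) ⧸ I) = 7 := by
    have h := Ideal.absNorm_span_singleton piO
    rw [hNormpi] at h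
    rw [← hIdef] at h
    rw [Ideal.absNorm_apply, Submodule.cardQuot_apply] at h
    simpa using h
  haveI hRfin : Finite ((𝓞 ℚ⟮β⟯) ⧸ I) := Nat.finite_of_card_ne_zero (by omega)
  haveI hRnt : Nontrivial ((𝓞 ℚ⟮β⟯) ⧸ I) := by
    rw [← Finite.one_lt_card_iff_nontrivial, hcard]; omega
  have h7R : (7 : (𝓞 ℚ⟮β⟯) ⧸ I) = 0 := by
    have h := card_nsmul_eq_zero' (G := (𝓞 ℚ⟮β⟯) ⧸ I) (x := (1 : (𝓞 ℚ⟮β⟯) ⧸ I))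
    rw [hcard] at h
    calc (7 : (𝓞 ℚ⟮β⟯) ⧸ I) = 7 • (1 : (𝓞 ℚ⟮β⟯) ⧸ I) := by simp [nsmul_eq_mul]
      _ = 0 := h
  have horder : addOrderOf (1 : (𝓞 ℚ⟮β⟯) ⧸ I) = 7 := by
    have hdvd : addOrderOf (1 : (𝓞 ℚ⟮β⟯) ⧸ I) ∣ 7 := by
      apply addOrderOf_dvd_of_nsmul_eq_zero
      simp [nsmul_eq_mul, h7R]
    rcases Nat.Prime.eq_one_or_self_of_dvd (by norm_num) _ hdvd with h | h
    · exfalso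
      rw [AddMonoid.addOrderOf_eq_one_iff] at h
      exact one_ne_zero h
    · exact h
  haveI hchar : CharP ((𝓞 ℚ⟮β⟯) ⧸ I) 7 := horder ▸ CharP.addOrderOf_one _
  set e' : ZMod 7 →+* (𝓞 ℚ⟮β⟯) ⧸ I := ZMod.castHom dvd_rfl _ with he'def
  have hinj : Function.Injective e' := ZMod.castHom_injective _
  have hsurj : Function.Surjective e' := by
    have := (Nat.bijective_iff_injective_and_card e').mpr ⟨hinj, by rw [Nat.card_zmod, hcard]⟩
    exact this.2
  -- the reduction map φ
  set φ : (𝓞 ℚ⟮β⟯) →+* ZMod 7 :=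
    (RingEquiv.ofBijective e' ⟨hinj, hsurj⟩).symm.toRingHom.comp (Ideal.Quotient.mk I)
    with hφdef
  -- the relation for π in the ring of integers
  have hπrel : piO^3 + 7*piO^2 + 14*piO + 7 = 0 := by
    have : (algebraMap (𝓞 ℚ⟮β⟯) ℚ⟮β⟯) (piO^3 + 7*piO^2 + 14*piO + 7)
        = (algebraMap (𝓞 ℚ⟮β⟯) ℚ⟮β⟯) 0 := by
      simp only [map_add, map_mul, map_pow, map_ofNat, map_zero, hpiOcoe]
      linear_combination hBrel
    exact NumberField.RingOfIntegers.ext this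
  -- uniqueness of ring homs to ZMod 7
  have hψπ : ∀ ψ : (𝓞 ℚ⟮β⟯) →+* ZMod 7, ψ piO = 0 := by
    intro ψ
    have h := congrArg ψ hπrel
    simp only [map_add, map_mul, map_pow, map_ofNat, map_zero] at h
    have h3 : (ψ piO)^3 = 0 := by
      rw [zmod7_7, zmod7_14] at h
      linear_combination h
    exact pow_eq_zero_iff (by norm_num) |>.mp h3
  have huniq : ∀ ψ₁ ψ₂ : (𝓞 ℚ⟮β⟯) →+* ZMod 7, ψ₁ = ψ₂ := by
    have hker : ∀ ψ : (𝓞 ℚ⟮β⟯) →+* ZMod 7, ∀ a ∈ I, ψ a = 0 := by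
      intro ψ a ha
      obtain ⟨c, hc⟩ := Ideal.mem_span_singleton'.mp ha
      rw [← hc, map_mul, hψπ ψ, mul_zero]
    intro ψ₁ ψ₂
    have hfact : ∀ ψ : (𝓞 ℚ⟮β⟯) →+* ZMod 7, ∀ x,
        ψ x = Ideal.Quotient.lift I ψ (hker ψ) (Ideal.Quotient.mk I x) := by
      intro ψ x
      rw [Ideal.Quotient.lift_mk]
    have heq : (Ideal.Quotient.lift I ψ₁ (hker ψ₁)).comp e'
        = (Ideal.Quotient.lift I ψ₂ (hker ψ₂)).comp e' := RingHom.ext_zmod _ _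
    ext x
    rw [hfact ψ₁ x, hfact ψ₂ x]
    obtain ⟨s, hs⟩ := hsurj (Ideal.Quotient.mk I x)
    rw [← hs]
    calc (Ideal.Quotient.lift I ψ₁ (hker ψ₁)) (e' s)
        = ((Ideal.Quotient.lift I ψ₁ (hker ψ₁)).comp e') s := rfl
      _ = ((Ideal.Quotient.lift I ψ₂ (hker ψ₂)).comp e') s := by rw [heq]
      _ = (Ideal.Quotient.lift I ψ₂ (hker ψ₂)) (e' s) := rfl
  -- the norm as a product over automorphisms
  have hcard3 : Fintype.card (ℚ⟮β⟯ ≃ₐ[ℚ] ℚ⟮β⟯) = 3 := by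
    rw [← Nat.card_eq_fintype_card, IsGalois.card_aut_eq_finrank, hfinrank]
  have hprod := prod_galRestrict_eq_norm ℤ ℚ ℚ⟮β⟯ (𝓞 ℚ⟮β⟯) lam
  have hmk : (IsIntegralClosure.mk' (R := ℤ) ℤ
      (Algebra.norm ℚ (algebraMap (𝓞 ℚ⟮β⟯) ℚ⟮β⟯ lam))
      (Algebra.isIntegral_norm ℚ (IsIntegralClosure.isIntegral ℤ ℚ⟮β⟯ lam).algebraMap))
      = Algebra.norm ℤ lam := by
    have h1 := IsIntegralClosure.algebraMap_mk' (R := ℤ) ℤ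
      (Algebra.norm ℚ (algebraMap (𝓞 ℚ⟮β⟯) ℚ⟮β⟯ lam))
      (Algebra.isIntegral_norm ℚ (IsIntegralClosure.isIntegral ℤ ℚ⟮β⟯ lam).algebraMap)
    have h2 := Algebra.coe_norm_int (K := ℚ⟮β⟯) lam
    have h3 : (algebraMap ℤ ℚ) (Algebra.norm ℤ lam) = (Algebra.norm ℤ lam : ℚ) := by
      simp [algebraMap_int_eq]
    apply (algebraMap ℤ ℚ).injective_int
    rw [h1, h3, h2]
  rw [hmk] at hprod
  -- apply φ
  have hgal : ∀ σ : ℚ⟮β⟯ ≃ₐ[ℚ] ℚ⟮β⟯,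
      φ ((galRestrict ℤ ℚ ℚ⟮β⟯ (𝓞 ℚ⟮β⟯) σ) lam) = φ lam := by
    intro σ
    have h := huniq (φ.comp (galRestrict ℤ ℚ ℚ⟮β⟯ (𝓞 ℚ⟮β⟯) σ).toAlgHom.toRingHom) φ
    have := RingHom.congr_fun h lam
    simpa using this
  have hmain : ((Algebra.norm ℤ lam : ℤ) : ZMod 7) = (φ lam)^3 := by
    have hφint : φ (algebraMap ℤ (𝓞 ℚ⟮β⟯) (Algebra.norm ℤ lam))
        = ((Algebra.norm ℤ lam : ℤ) : ZMod 7) := by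
      rw [← RingHom.comp_apply]
      exact eq_intCast (φ.comp (algebraMap ℤ (𝓞 ℚ⟮β⟯))) _
    calc ((Algebra.norm ℤ lam : ℤ) : ZMod 7)
        = φ (algebraMap ℤ (𝓞 ℚ⟮β⟯) (Algebra.norm ℤ lam)) := hφint.symm
      _ = φ (∏ σ : ℚ⟮β⟯ ≃ₐ[ℚ] ℚ⟮β⟯, (galRestrict ℤ ℚ ℚ⟮β⟯ (𝓞 ℚ⟮β⟯) σ) lam) := by
          rw [hprod]
      _ = ∏ σ : ℚ⟮β⟯ ≃ₐ[ℚ] ℚ⟮β⟯, φ ((galRestrict ℤ ℚ ℚ⟮β⟯ (𝓞 ℚ⟮β⟯) σ) lam) := by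
          rw [map_prod]
      _ = ∏ _σ : ℚ⟮β⟯ ≃ₐ[ℚ] ℚ⟮β⟯, φ lam := Finset.prod_congr rfl (fun σ _ => hgal σ)
      _ = (φ lam)^(Fintype.card (ℚ⟮β⟯ ≃ₐ[ℚ] ℚ⟮β⟯)) := by
          rw [Finset.prod_const, Finset.card_univ]
      _ = (φ lam)^3 := by rw [hcard3]
  rcases cube_zmod7 (φ lam) with h | h | h
  · left
    exact (ZMod.intCast_eq_intCast_iff _ _ 7).mp (by rw [hmain, h]; push_cast; ring)
  · right; left
    exact (ZMod.intCast_eq_intCast_iff _ _ 7).mp (by rw [hmain, h]; push_cast; ring)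
  · right; right
    exact (ZMod.intCast_eq_intCast_iff _ _ 7).mp (by rw [hmain, h]; push_cast; ring)
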